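/- Let m be a positive integer, C > 0, and let f : {0, 1, …, m} → ℝ be nonnegative and satisfy f(k) ≤ C · f(k−1)^{1/2} · f(k+1)^{1/2} for all 0 < k < m. Then for all 0 ≤ k ≤ m one has f(k) ≤ C^{k(m−k)} · f(0)^{1−k/m} · f(m)^{k/m}. -/

import Mathlib

open Real Finset

private lemma maxprin (m : ℕ) (u : ℕ → ℝ) (h0 : u 0 = 0) (hmm : u m = 0)
    (hconv : ∀ k, 0 < k → k < m → 2 * u k ≤ u (k-1) + u (k+1)) :
    ∀ k, k ≤ m → u k ≤ 0 := by
  obtain ⟨b, hb, hbmax⟩ := Finset.exists_max_image (Finset.range (m+1)) u ⟨0, by simp⟩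
  have hbm : b ≤ m := Nat.lt_succ_iff.mp (Finset.mem_range.mp hb)
  intro k hk
  have hkmax : u k ≤ u b := hbmax k (Finset.mem_range.mpr (Nat.lt_succ_of_le hk))
  by_contra hpos
  push_neg at hpos
  have hub : 0 < u b := lt_of_lt_of_le hpos hkmax
  have hb0 : 0 < b := by
    rcases Nat.eq_zero_or_pos b with h | h
    · rw [h, h0] at hub; exact absurd hub (lt_irrefl 0)
    · exact h
  have key : ∀ j, b ≤ j → j ≤ m → u j = u b := by
    intro j hj
    induction j, hj using Nat.le_induction with
    | base => intro _; rfl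
    | succ j hj ih =>
      intro hjm
      have hjm' : j < m := by omega
      have huj : u j = u b := ih (by omega)
      have h1 : 2 * u j ≤ u (j-1) + u (j+1) := hconv j (by omega) hjm'
      have h2 : u (j-1) ≤ u b := hbmax _ (Finset.mem_range.mpr (by omega))
      have h3 : u (j+1) ≤ u b := hbmax _ (Finset.mem_range.mpr (by omega))
      linarith
  have := key m hbm le_rfl
  rw [hmm] at this
  linarith

theorem stmt1 (m : ℕ) (hm : 0 < m) (C : ℝ) (hC : 0 < C) (f : ℕ → ℝ)
    (hf : ∀ k, k ≤ m → 0 ≤ f k)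
    (hrec : ∀ k, 0 < k → k < m →
      f k ≤ C * (f (k - 1)) ^ ((1 : ℝ) / 2) * (f (k + 1)) ^ ((1 : ℝ) / 2)) :
    ∀ k, k ≤ m →
      f k ≤ C ^ (k * (m - k)) * (f 0) ^ (1 - (k : ℝ) / m) * (f m) ^ ((k : ℝ) / m) := by
  have hmne : (m:ℝ) ≠ 0 := Nat.cast_ne_zero.mpr (by omega)
  intro k hk
  rcases Nat.eq_zero_or_pos k with rfl | hk0
  · simp
  rcases eq_or_lt_of_le hk with rfl | hkm
  · simp [Nat.sub_self, div_self hmne]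
  -- now 0 < k < m
  by_cases hall : ∀ j, j ≤ m → 0 < f j
  · -- all positive: log-convexity
    set L := Real.log C with hL
    set g : ℕ → ℝ := fun j => Real.log (f j) with hg
    have main := maxprin m
      (fun j => g j - ((1 - (j:ℝ)/m) * g 0 + ((j:ℝ)/m) * g m)
        - (j:ℝ) * ((m:ℝ) - (j:ℝ)) * L)
      (by norm_num)
      (by field_simp; ring)
      ?_ k hk
    · 
      have hfk := hall k hk
      have hf0 := hall 0 (Nat.zero_le m)
      have hfm := hall m le_rfl
      have hfin : f k ≤ Real.exp ((k:ℝ) * ((m:ℝ) - (k:ℝ)) * L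
          + ((1 - (k:ℝ)/m) * g 0 + ((k:ℝ)/m) * g m)) := by
        rw [← Real.exp_log hfk]
        exact Real.exp_le_exp.mpr (by linarith)
      calc f k ≤ _ := hfin
        _ = C ^ (k * (m - k)) * (f 0) ^ (1 - (k : ℝ) / m) * (f m) ^ ((k : ℝ) / m) := by
          rw [← Real.rpow_natCast C (k * (m-k)), Real.rpow_def_of_pos hC,
            Real.rpow_def_of_pos hf0, Real.rpow_def_of_pos hfm,
            ← Real.exp_add, ← Real.exp_add]
          congr 1
          push_cast [Nat.cast_sub hk]
          rw [hL, hg]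
          ring
    · intro j hj1 hj2
      have hfj := hall j (le_of_lt hj2)
      have hfj1 := hall (j-1) (by omega)
      have hfj2 := hall (j+1) (by omega)
      have key : g j ≤ L + (1/2) * g (j-1) + (1/2) * g (j+1) := by
        have h := hrec j hj1 hj2
        have hlog : Real.log (f j) ≤
            Real.log (C * (f (j - 1)) ^ ((1:ℝ)/2) * (f (j + 1)) ^ ((1:ℝ)/2)) :=
          Real.log_le_log hfj h
        rw [Real.log_mul (by positivity) (by positivity),
          Real.log_mul (ne_of_gt hC) (by positivity),
          Real.log_rpow hfj1, Real.log_rpow hfj2] at hlog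
        rw [hg, hL]
        simp only at hlog ⊢
        linarith
      rw [Nat.cast_sub hj1, Nat.cast_one]
      push_cast
      rw [← sub_nonneg]
      have h2 : (0:ℝ) ≤ (L + 1/2 * g (j-1) + 1/2 * g (j+1) - g j) * 2 := by linarith
      convert h2 using 1
      ring
  · -- some value is zero: all interior values are zero
    push_neg at hall
    obtain ⟨j0, hj0m, hj0⟩ := hall
    have hfj0 : f j0 = 0 := le_antisymm hj0 (hf j0 hj0m)
    have hright : ∀ i, j0 ≤ i → i < m → f i = 0 := by
      intro i hi
      induction i, hi using Nat.le_induction with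
      | base => intro _; exact hfj0
      | succ i hji ih =>
        intro him
        have hfi : f i = 0 := ih (by omega)
        have h := hrec (i+1) (by omega) him
        rw [show i+1-1 = i from rfl, hfi, Real.zero_rpow (by norm_num)] at h
        have h' : f (i+1) ≤ 0 := by simpa using h
        exact le_antisymm h' (hf _ (by omega))
    have hleft : ∀ i, 0 < i → i ≤ j0 → f i = 0 := by
      have haux : ∀ d i, i = j0 - d → 0 < i → f i = 0 := by
        intro d
        induction d with
        | zero => intro i hi _; rw [hi, Nat.sub_zero]; exact hfj0
        | succ d ih =>
          intro i hi hipos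
          have hi1 : j0 - d = i + 1 := by omega
          have hfi1 : f (i+1) = 0 := ih (i+1) hi1.symm (by omega)
          have h := hrec i hipos (by omega)
          rw [hfi1, Real.zero_rpow (by norm_num), mul_zero] at h
          exact le_antisymm h (hf i (by omega))
      intro i hi hij0
      exact haux (j0 - i) i (by omega) hi
    have hzero : f k = 0 := by
      rcases le_or_gt k j0 with h | h
      · exact hleft k hk0 h
      · exact hright k (le_of_lt h) hkm
    rw [hzero]
    exact mul_nonneg (mul_nonneg (pow_nonneg hC.le _)
      (Real.rpow_nonneg (hf 0 (Nat.zero_le m)) _))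
      (Real.rpow_nonneg (hf m le_rfl) _)
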